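/- Let G ⊂ ℚ_p be a finite set, N ∈ ℤ, K = ⊔_{I∈G}(I + p^Nℤ_p) a disjoint union, A = (A_{JK})_{J,K∈G} nonnegative reals, γ_I = ∑_K A_{IK}, and J_N(x,y) = p^N ∑_{J,K∈G} A_{JK} 1_{J+p^Nℤ_p}(x) 1_{K+p^Nℤ_p}(y). Let L be the operator (Lφ)(x) = ∫_K (φ(y) − φ(x)) J_N(x,y) dy. If Ψ : K → ℂ is integrable, supported in I + p^Nℤ_p for some I ∈ G, and satisfies ∫ Ψ(y) dy = 0, then LΨ = −γ_I Ψ; i.e., Ψ is an eigenfunction of L with eigenvalue −γ_I. -/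

import Mathlib

open MeasureTheory ENNReal

variable {p : ℕ} [hp : Fact p.Prime]

lemma ball_decomp (n : ℤ) :
    Metric.closedBall (0:ℚ_[p]) ((p:ℝ)^(-n)) =
      ⋃ i ∈ Finset.range p,
        Metric.closedBall ((i:ℚ_[p]) * (p:ℚ_[p])^n) ((p:ℝ)^(-(n+1))) := by
  have hp1 : (1:ℝ) < (p:ℝ) := by exact_mod_cast hp.out.one_lt
  have hp0 : ((p:ℚ_[p])) ≠ 0 := by exact_mod_cast hp.out.ne_zero
  ext x
  simp only [Set.mem_iUnion, Metric.mem_closedBall, dist_eq_norm, sub_zero,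
    Finset.mem_range, exists_prop]
  constructor
  · intro hx
    set y : ℚ_[p] := x * (p:ℚ_[p])^(-n) with hy
    have hynorm : ‖y‖ ≤ 1 := by
      rw [hy, norm_mul, Padic.norm_p_zpow, neg_neg]
      calc ‖x‖ * (p:ℝ)^n ≤ (p:ℝ)^(-n) * (p:ℝ)^n := by
            apply mul_le_mul_of_nonneg_right hx (zpow_nonneg (by positivity) _)
        _ = 1 := by rw [← zpow_add₀ (by positivity : (p:ℝ) ≠ 0)]; simp
    set z : ℤ_[p] := ⟨y, hynorm⟩ with hz
    refine ⟨z.appr 1, by simpa using z.appr_lt 1, ?_⟩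
    have hspec : ‖z - (z.appr 1 : ℤ_[p])‖ ≤ (p:ℝ)^(-(1:ℕ):ℤ) :=
      (PadicInt.norm_le_pow_iff_mem_span_pow _ 1).2 (PadicInt.appr_spec 1 z)
    have hQ : ‖y - ((z.appr 1 : ℕ) : ℚ_[p])‖ ≤ (p:ℝ)^(-1:ℤ) := by
      have : ((z - (z.appr 1 : ℤ_[p]) : ℤ_[p]) : ℚ_[p]) = y - ((z.appr 1 : ℕ) : ℚ_[p]) := by
        push_cast [hz]
        rfl
      calc ‖y - ((z.appr 1 : ℕ) : ℚ_[p])‖ = ‖(z - (z.appr 1 : ℤ_[p]) : ℤ_[p])‖ := by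
            rw [← this, PadicInt.padic_norm_e_of_padicInt]
        _ ≤ (p:ℝ)^(-1:ℤ) := by simpa using hspec
    have hxy : x - ((z.appr 1 : ℕ) : ℚ_[p]) * (p:ℚ_[p])^n
        = (y - ((z.appr 1 : ℕ) : ℚ_[p])) * (p:ℚ_[p])^n := by
      rw [hy, sub_mul, mul_assoc, ← zpow_add₀ hp0]
      simp
    rw [hxy, norm_mul, Padic.norm_p_zpow]
    calc ‖y - ((z.appr 1 : ℕ) : ℚ_[p])‖ * (p:ℝ)^(-n)
        ≤ (p:ℝ)^(-1:ℤ) * (p:ℝ)^(-n) :=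
          mul_le_mul_of_nonneg_right hQ (zpow_nonneg (by positivity) _)
      _ = (p:ℝ)^(-(n+1)) := by rw [← zpow_add₀ (by positivity : (p:ℝ) ≠ 0)]; ring_nf
  · rintro ⟨i, _, hix⟩
    have h1 : ‖(i:ℚ_[p]) * (p:ℚ_[p])^n‖ ≤ (p:ℝ)^(-n) := by
      rw [norm_mul, Padic.norm_p_zpow]
      have : ‖((i:ℤ) : ℚ_[p])‖ ≤ 1 := Padic.norm_int_le_one _
      calc ‖(i:ℚ_[p])‖ * (p:ℝ)^(-n) ≤ 1 * (p:ℝ)^(-n) := by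
            apply mul_le_mul_of_nonneg_right (by simpa using this)
              (zpow_nonneg (by positivity) _)
        _ = (p:ℝ)^(-n) := one_mul _
    have h2 : (p:ℝ)^(-(n+1)) ≤ (p:ℝ)^(-n) :=
      zpow_le_zpow_right₀ hp1.le (by omega)
    calc ‖x‖ = ‖(x - (i:ℚ_[p]) * (p:ℚ_[p])^n) + (i:ℚ_[p]) * (p:ℚ_[p])^n‖ := by ring_nf
      _ ≤ max ‖x - (i:ℚ_[p]) * (p:ℚ_[p])^n‖ ‖(i:ℚ_[p]) * (p:ℚ_[p])^n‖ :=
          Padic.nonarchimedean _ _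
      _ ≤ (p:ℝ)^(-n) := max_le (hix.trans h2) h1

lemma ball_decomp_disj (n : ℤ) :
    (↑(Finset.range p) : Set ℕ).PairwiseDisjoint
      (fun i : ℕ => Metric.closedBall ((i:ℚ_[p]) * (p:ℚ_[p])^n) ((p:ℝ)^(-(n+1)))) := by
  have hp1 : (1:ℝ) < (p:ℝ) := by exact_mod_cast hp.out.one_lt
  intro i hi j hj hne
  simp only [Function.onFun]
  simp only [Finset.coe_range, Set.mem_Iio] at hi hj
  rw [Set.disjoint_left]
  intro x hxi hxj
  rw [Metric.mem_closedBall, dist_eq_norm] at hxi hxj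
  have hc : ‖(i:ℚ_[p]) * (p:ℚ_[p])^n - (j:ℚ_[p]) * (p:ℚ_[p])^n‖ ≤ (p:ℝ)^(-(n+1)) := by
    have : (i:ℚ_[p]) * (p:ℚ_[p])^n - (j:ℚ_[p]) * (p:ℚ_[p])^n
        = -(x - (i:ℚ_[p]) * (p:ℚ_[p])^n) + (x - (j:ℚ_[p]) * (p:ℚ_[p])^n) := by ring
    rw [this]
    have hxi' : ‖(i:ℚ_[p]) * (p:ℚ_[p])^n - x‖ ≤ (p:ℝ)^(-(n+1)) := by
      rw [norm_sub_rev]; exact hxi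
    exact le_trans (Padic.nonarchimedean _ _) (max_le (by simpa using hxi') hxj)
  obtain ⟨d, hd⟩ : ∃ d : ℤ, d = (i:ℤ) - (j:ℤ) := ⟨_, rfl⟩
  have hnorm : ‖(d : ℚ_[p])‖ < 1 := by
    have heq : (d : ℚ_[p]) * (p:ℚ_[p])^n
        = (i:ℚ_[p]) * (p:ℚ_[p])^n - (j:ℚ_[p]) * (p:ℚ_[p])^n := by
      rw [hd]; push_cast; ring
    have hthis := hc
    rw [← heq, norm_mul, Padic.norm_p_zpow] at hthis
    have hpn : (0:ℝ) < (p:ℝ)^(-n) := zpow_pos (by positivity) _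
    have h2 : (p:ℝ)^(-(n+1)) = (p:ℝ)^(-1:ℤ) * (p:ℝ)^(-n) := by
      rw [← zpow_add₀ (by positivity : (p:ℝ) ≠ 0)]; ring_nf
    rw [h2] at hthis
    have hle := (mul_le_mul_iff_of_pos_right hpn).mp hthis
    calc ‖(d : ℚ_[p])‖ ≤ (p:ℝ)^(-1:ℤ) := hle
      _ < 1 := by
          rw [zpow_neg_one, inv_lt_one_iff₀]
          right; exact hp1
  have hdvd : (p:ℤ) ∣ d := Padic.norm_intCast_lt_one_iff.mp hnorm
  have : d = 0 := Int.eq_zero_of_abs_lt_dvd hdvd (by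
    rw [hd, abs_sub_lt_iff]; constructor <;> [omega; omega])
  exact hne (by omega)

lemma padic_ball_measure [MeasurableSpace ℚ_[p]] [BorelSpace ℚ_[p]]
    (μ : Measure ℚ_[p]) [μ.IsAddHaarMeasure]
    (hμ : μ (Metric.closedBall 0 1) = 1) (n : ℤ) (c : ℚ_[p]) :
    μ (Metric.closedBall c ((p:ℝ)^(-n))) = ENNReal.ofReal ((p:ℝ)^(-n)) := by
  have hp1 : (1:ℝ) < (p:ℝ) := by exact_mod_cast hp.out.one_lt
  have hpR : (p:ℝ) ≠ 0 := by positivity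
  -- translation invariance
  have htrans : ∀ (c : ℚ_[p]) (r : ℝ),
      μ (Metric.closedBall c r) = μ (Metric.closedBall 0 r) := by
    intro c r
    have hpre : (fun x => (-c) + x) ⁻¹' (Metric.closedBall 0 r) = Metric.closedBall c r := by
      ext x
      simp [Metric.mem_closedBall, dist_eq_norm, neg_add_eq_sub]
    rw [← hpre, measure_preimage_add]
  -- recursion
  have hrec : ∀ m : ℤ, μ (Metric.closedBall (0:ℚ_[p]) ((p:ℝ)^(-m)))
      = p * μ (Metric.closedBall (0:ℚ_[p]) ((p:ℝ)^(-(m+1)))) := by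
    intro m
    rw [ball_decomp m,
      measure_biUnion_finset (ball_decomp_disj m) (fun i _ => measurableSet_closedBall)]
    have heach : ∀ i ∈ Finset.range p,
        μ (Metric.closedBall ((i:ℚ_[p]) * (p:ℚ_[p])^m) ((p:ℝ)^(-(m+1))))
          = μ (Metric.closedBall (0:ℚ_[p]) ((p:ℝ)^(-(m+1)))) := fun i _ => htrans _ _
    rw [Finset.sum_congr rfl heach, Finset.sum_const, Finset.card_range, nsmul_eq_mul]
  have hfin : ∀ m : ℤ, μ (Metric.closedBall (0:ℚ_[p]) ((p:ℝ)^(-m))) ≠ ⊤ :=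
    fun m => (isCompact_closedBall _ _).measure_lt_top.ne
  have hbase : μ (Metric.closedBall (0:ℚ_[p]) ((p:ℝ)^(-(0:ℤ)))) = 1 := by
    simpa using hμ
  have hpE0 : (p : ℝ≥0∞) ≠ 0 := by exact_mod_cast hp.out.ne_zero
  have hpET : (p : ℝ≥0∞) ≠ ⊤ := ENNReal.natCast_ne_top p
  have hofr : ∀ m : ℤ, ENNReal.ofReal ((p:ℝ)^(-m))
      = (p : ℝ≥0∞) * ENNReal.ofReal ((p:ℝ)^(-(m+1))) := by
    intro m
    rw [← ENNReal.ofReal_natCast p, ← ENNReal.ofReal_mul (by positivity)]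
    congr 1
    rw [show (-m) = 1 + -(m+1) from by ring, zpow_add₀ hpR, zpow_one]
  have key : ∀ m : ℤ, μ (Metric.closedBall (0:ℚ_[p]) ((p:ℝ)^m))
      = ENNReal.ofReal ((p:ℝ)^m) := by
    intro m
    induction m using Int.induction_on with
    | zero => simpa using hμ
    | succ k ih =>
        have h1 := hrec (-((k:ℤ)+1))
        rw [show (-(-((k:ℤ)+1))) = (k:ℤ)+1 from by ring,
          show (-(-((k:ℤ)+1)+1)) = (k:ℤ) from by ring] at h1
        rw [h1, ih, ← ENNReal.ofReal_natCast p, ← ENNReal.ofReal_mul (by positivity)]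
        congr 1
        rw [show ((k:ℤ)+1) = 1 + (k:ℤ) from by ring, zpow_add₀ hpR, zpow_one]
    | pred k ih =>
        have h1 := hrec (k:ℤ)
        rw [ih] at h1
        have h3 := (ENNReal.mul_right_inj hpE0 hpET).mp ((hofr k).symm.trans h1)
        rw [show (-(k:ℤ)-1) = -((k:ℤ)+1) from by ring]
        exact h3.symm
  rw [htrans c _]
  exact key (-n)

theorem stmt12 (p : ℕ) [Fact p.Prime] [MeasurableSpace ℚ_[p]] [BorelSpace ℚ_[p]]
    (μ : Measure ℚ_[p]) [μ.IsAddHaarMeasure]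
    (hμ : μ (Metric.closedBall 0 1) = 1)
    (G : Finset ℚ_[p]) (N : ℤ)
    (hdisj : (G : Set ℚ_[p]).PairwiseDisjoint
      (fun I => Metric.closedBall I ((p : ℝ)^(-N))))
    (Kset : Set ℚ_[p]) (hK : Kset = ⋃ I ∈ G, Metric.closedBall I ((p : ℝ)^(-N)))
    (A : ℚ_[p] → ℚ_[p] → ℝ) (hA : ∀ J K, 0 ≤ A J K)
    (γ : ℚ_[p] → ℝ) (hγ : ∀ I, γ I = ∑ K ∈ G, A I K)
    (JN : ℚ_[p] → ℚ_[p] → ℝ)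
    (hJN : ∀ x y, JN x y = (p : ℝ)^N * ∑ J ∈ G, ∑ K ∈ G, A J K *
      (if ‖x - J‖ ≤ (p : ℝ)^(-N) then 1 else 0) *
      (if ‖y - K‖ ≤ (p : ℝ)^(-N) then 1 else 0))
    (I : ℚ_[p]) (hI : I ∈ G)
    (Ψ : ℚ_[p] → ℂ) (hΨint : Integrable Ψ μ)
    (hsupp : ∀ x, x ∉ Metric.closedBall I ((p : ℝ)^(-N)) → Ψ x = 0)
    (hzero : ∫ y, Ψ y ∂μ = 0) :
    ∀ x ∈ Kset, ∫ y in Kset, (Ψ y - Ψ x) * (JN x y : ℂ) ∂μ = -(γ I : ℂ) * Ψ x := by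
  intro x hx
  classical
  have hp1 : (1:ℝ) < (p:ℝ) := by exact_mod_cast (Fact.out : p.Prime).one_lt
  have hrpos : (0:ℝ) < (p:ℝ)^(-N) := zpow_pos (by positivity) _
  have hmeasB : ∀ c : ℚ_[p],
      μ (Metric.closedBall c ((p:ℝ)^(-N))) = ENNReal.ofReal ((p:ℝ)^(-N)) :=
    fun c => padic_ball_measure μ hμ N c
  rw [hK, Set.mem_iUnion₂] at hx
  obtain ⟨J₀, hJ₀G, hxJ₀⟩ := hx
  have hxJ₀' : ‖x - J₀‖ ≤ (p:ℝ)^(-N) := by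
    rwa [Metric.mem_closedBall, dist_eq_norm] at hxJ₀
  have hD : ∀ y, JN x y = ∑ K ∈ G, ((p:ℝ)^N * A J₀ K) *
      (if ‖y - K‖ ≤ (p:ℝ)^(-N) then 1 else 0) := by
    intro y
    have h1 : ∀ J ∈ G, J ≠ J₀ →
        (∑ K ∈ G, A J K * (if ‖x - J‖ ≤ (p:ℝ)^(-N) then 1 else 0) *
          (if ‖y - K‖ ≤ (p:ℝ)^(-N) then 1 else 0)) = 0 := by
      intro J hJ hne
      have hxJ : ¬ ‖x - J‖ ≤ (p:ℝ)^(-N) := by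
        intro h
        exact Set.disjoint_left.mp (hdisj hJ hJ₀G hne)
          (by rwa [Metric.mem_closedBall, dist_eq_norm]) hxJ₀
      exact Finset.sum_eq_zero fun K _ => by rw [if_neg hxJ]; ring
    rw [hJN x y, Finset.sum_eq_single_of_mem J₀ hJ₀G h1, Finset.mul_sum]
    exact Finset.sum_congr rfl fun K _ => by rw [if_pos hxJ₀']; ring
  set c₀ : ℝ := (p:ℝ)^N * A J₀ I with hc₀
  have hE : ∀ y, Ψ y * ((JN x y : ℝ) : ℂ) = (c₀ : ℂ) * Ψ y := by
    intro y
    by_cases hy : y ∈ Metric.closedBall I ((p:ℝ)^(-N))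
    · have hyI : ‖y - I‖ ≤ (p:ℝ)^(-N) := by
        rwa [Metric.mem_closedBall, dist_eq_norm] at hy
      have hJNy : JN x y = c₀ := by
        rw [hD y, Finset.sum_eq_single_of_mem I hI ?_]
        · rw [if_pos hyI, mul_one]
        · intro K hKG hne
          have hyK : ¬ ‖y - K‖ ≤ (p:ℝ)^(-N) := by
            intro h
            exact Set.disjoint_left.mp (hdisj hKG hI hne)
              (by rwa [Metric.mem_closedBall, dist_eq_norm]) hy
          rw [if_neg hyK, mul_zero]
      rw [hJNy]; ring
    · rw [hsupp y hy]; ring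
  have hDind : (fun y => JN x y) = fun y => ∑ K ∈ G,
      Set.indicator (Metric.closedBall K ((p:ℝ)^(-N))) (fun _ => (p:ℝ)^N * A J₀ K) y := by
    funext y
    rw [hD y]
    refine Finset.sum_congr rfl fun K _ => ?_
    rw [Set.indicator_apply]
    by_cases h : y ∈ Metric.closedBall K ((p:ℝ)^(-N))
    · rw [if_pos h, if_pos (by rwa [Metric.mem_closedBall, dist_eq_norm] at h), mul_one]
    · rw [if_neg h,
        if_neg (fun hh => h (by rw [Metric.mem_closedBall, dist_eq_norm]; exact hh)),
        mul_zero]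
  have hindint : ∀ K : ℚ_[p], Integrable
      (Set.indicator (Metric.closedBall K ((p:ℝ)^(-N))) (fun _ => (p:ℝ)^N * A J₀ K)) μ := by
    intro K
    rw [integrable_indicator_iff measurableSet_closedBall]
    exact integrableOn_const (by rw [hmeasB K]; exact ENNReal.ofReal_ne_top)
  have hgint : Integrable (fun y => JN x y) μ := by
    rw [hDind]
    exact integrable_finset_sum _ (fun K _ => hindint K)
  have hBIK : Metric.closedBall I ((p:ℝ)^(-N)) ⊆ Kset := by
    rw [hK]
    exact Set.subset_iUnion₂ (s := fun J _ => Metric.closedBall J ((p:ℝ)^(-N))) I hI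
  have h1int : Integrable (fun y => Ψ y * ((JN x y : ℝ) : ℂ)) (μ.restrict Kset) := by
    have heq : (fun y => Ψ y * ((JN x y : ℝ) : ℂ)) = fun y => (c₀:ℂ) * Ψ y := funext hE
    rw [heq]; exact (hΨint.const_mul _).restrict
  have h2int : Integrable (fun y => Ψ x * ((JN x y : ℝ) : ℂ)) (μ.restrict Kset) :=
    ((hgint.ofReal).const_mul (Ψ x)).restrict
  have hsplit : ∫ y in Kset, (Ψ y - Ψ x) * (JN x y : ℂ) ∂μ
      = (∫ y in Kset, Ψ y * (JN x y : ℂ) ∂μ) - ∫ y in Kset, Ψ x * (JN x y : ℂ) ∂μ := by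
    rw [← integral_sub h1int h2int]
    exact integral_congr_ae (Filter.Eventually.of_forall fun y => by ring)
  have hfirst : ∫ y in Kset, Ψ y * (JN x y : ℂ) ∂μ = 0 := by
    have heq : ∫ y in Kset, Ψ y * (JN x y : ℂ) ∂μ = ∫ y in Kset, (c₀:ℂ) * Ψ y ∂μ :=
      integral_congr_ae (Filter.Eventually.of_forall fun y => hE y)
    rw [heq, integral_const_mul]
    have h0 : ∫ y in Kset, Ψ y ∂μ = ∫ y, Ψ y ∂μ :=
      setIntegral_eq_integral_of_forall_compl_eq_zero fun y hy =>
        hsupp y (fun hmem => hy (hBIK hmem))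
    rw [h0, hzero, mul_zero]
  have hreal : ∫ y in Kset, JN x y ∂μ = γ J₀ := by
    rw [hDind, integral_finset_sum _ (fun K _ => (hindint K).restrict)]
    have heach : ∀ K ∈ G, (∫ y in Kset,
        Set.indicator (Metric.closedBall K ((p:ℝ)^(-N))) (fun _ => (p:ℝ)^N * A J₀ K) y ∂μ)
        = A J₀ K := by
      intro K hKG
      rw [setIntegral_indicator measurableSet_closedBall]
      have hsub : Kset ∩ Metric.closedBall K ((p:ℝ)^(-N))
          = Metric.closedBall K ((p:ℝ)^(-N)) :=
        Set.inter_eq_self_of_subset_right (by rw [hK]; exact Set.subset_iUnion₂ (s := fun J _ => Metric.closedBall J ((p:ℝ)^(-N))) K hKG)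
      rw [hsub, setIntegral_const, Measure.real, hmeasB K, ENNReal.toReal_ofReal hrpos.le, smul_eq_mul,
        ← mul_assoc, ← zpow_add₀ (by positivity : (p:ℝ) ≠ 0)]
      simp
    rw [Finset.sum_congr rfl heach, hγ J₀]
  have hsecond : ∫ y in Kset, Ψ x * (JN x y : ℂ) ∂μ = Ψ x * (γ J₀ : ℂ) := by
    rw [integral_const_mul]
    congr 1
    rw [← hreal]
    exact integral_ofReal
  rw [hsplit, hfirst, hsecond, zero_sub]
  by_cases hxI : x ∈ Metric.closedBall I ((p:ℝ)^(-N))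
  · have hJI : J₀ = I := by
      by_contra hne
      exact Set.disjoint_left.mp (hdisj hJ₀G hI hne) hxJ₀ hxI
    rw [hJI]; ring
  · rw [hsupp x hxI]; ring
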